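/- Fix p, K ∈ [1,∞). Suppose (X,d_X) is a p-barycentric metric space with constant K via a barycenter map B. Then for every n,t ∈ ℕ, every symmetric stochastic matrix A = (a_{ij}) ∈ M_n(ℝ) and every f ∈ L_p^n(X): d_{L_p^n(X)}(f, (A⊗I_X^n)^{[t]}(f))^p ≤ (1/n) Σ_{i,j} (A^t)_{ij} d_X(f(i),f(j))^p, where (A⊗I_X^n)^{[t]} denotes the t-fold iterate of A⊗I_X^n. -/
import Mathlib


open scoped BigOperators ENNReal
open scoped Classical

noncomputable section

/-- A finitely supported probability measure on `X`. -/
structure FinProb (X : Type*) where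
  w : X →₀ ℝ
  nonneg : ∀ x, 0 ≤ w x
  total : w.sum (fun _ r => r) = 1

namespace FinProb

/-- The Dirac point mass at `x`. -/
def dirac {X : Type*} (x : X) : FinProb X where
  w := Finsupp.single x 1
  nonneg := fun y => by
    rw [Finsupp.single_apply]
    split <;> norm_num
  total := Finsupp.sum_single_index rfl

/-- The probability measure `∑ i, w i • δ_{Z i}` for nonnegative weights summing to 1. -/
def mix {ι X : Type*} [Fintype ι] (w : ι → ℝ) (Z : ι → X)
    (hw : ∀ i, 0 ≤ w i) (h1 : ∑ i, w i = 1) : FinProb X where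
  w := ∑ i, Finsupp.single (Z i) (w i)
  nonneg := fun x => by
    rw [Finset.sum_apply']
    refine Finset.sum_nonneg fun i _ => ?_
    rw [Finsupp.single_apply]
    split
    · exact hw i
    · exact le_rfl
  total := by
    rw [← Finsupp.sum_finset_sum_index (fun _ => rfl) (fun _ _ _ => rfl)]
    have h : ∀ i ∈ (Finset.univ : Finset ι),
        (Finsupp.single (Z i) (w i)).sum (fun _ r => r) = w i :=
      fun i _ => Finsupp.sum_single_index rfl
    rw [Finset.sum_congr rfl h]
    exact h1

/-- `mix` with normalization of the weights. -/
def mixN {ι X : Type*} [Fintype ι] (w : ι → ℝ) (Z : ι → X)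
    (hw : ∀ i, 0 ≤ w i) (hpos : 0 < ∑ i, w i) : FinProb X :=
  mix (fun i => w i / ∑ j, w j) Z
    (fun i => div_nonneg (hw i) hpos.le)
    (by rw [← Finset.sum_div, div_self (ne_of_gt hpos)])

/-- Integral of `f : X → ℝ` against `μ`. -/
def exp {X : Type*} (μ : FinProb X) (f : X → ℝ) : ℝ :=
  μ.w.sum fun x r => r * f x

end FinProb

/-- `π` is a coupling of `μ` and `ν`. -/
def IsCoupling {X : Type*} (π : FinProb (X × X)) (μ ν : FinProb X) : Prop :=
  (∀ x : X, (π.w.sum fun q r => if q.1 = x then r else 0) = μ.w x) ∧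
  (∀ y : X, (π.w.sum fun q r => if q.2 = y then r else 0) = ν.w y)

/-- The Wasserstein `p` distance between finitely supported probability measures. -/
def wassersteinDist {X : Type*} [MetricSpace X] (p : ℝ) (μ ν : FinProb X) : ℝ :=
  sInf {c : ℝ | ∃ π : FinProb (X × X), IsCoupling π μ ν ∧
    c = (π.exp fun q => dist q.1 q.2 ^ p) ^ p⁻¹}

/-- A barycenter map sends Dirac masses to their base points. -/
def IsBarycenterMap {X : Type*} (bary : FinProb X → X) : Prop :=
  ∀ x : X, bary (FinProb.dirac x) = x

/-- `X` is `W_p` barycentric with constant `Γ` via the barycenter map `bary`. -/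
def IsWBarycentric {X : Type*} [MetricSpace X] (p Γ : ℝ) (bary : FinProb X → X) : Prop :=
  IsBarycenterMap bary ∧
    ∀ μ ν : FinProb X, dist (bary μ) (bary ν) ≤ Γ * wassersteinDist p μ ν

/-- `X` is `p`-barycentric with constant `K` via the map `bary`. -/
def IsPBarycentric {X : Type*} [MetricSpace X] (p K : ℝ) (bary : FinProb X → X) : Prop :=
  ∀ (x : X) (μ : FinProb X),
    dist x (bary μ) ^ p + K ^ (-p) * (μ.exp fun y => dist (bary μ) y ^ p)
      ≤ μ.exp fun y => dist x y ^ p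

/-- A (possibly rectangular) matrix is stochastic if it has nonnegative entries and
each row sums to `1`. -/
def IsStochastic {n m : ℕ} (A : Matrix (Fin n) (Fin m) ℝ) : Prop :=
  (∀ i j, 0 ≤ A i j) ∧ ∀ i, ∑ j, A i j = 1

/-- `A` is reversible relative to the probability vector `π`. -/
def IsReversible {n : ℕ} (A : Matrix (Fin n) (Fin n) ℝ) (π : Fin n → ℝ) : Prop :=
  ∀ i j, π i * A i j = π j * A j i

/-- `π` is a probability vector. -/
def IsProbVec {n : ℕ} (π : Fin n → ℝ) : Prop :=
  (∀ i, 0 ≤ π i) ∧ ∑ i, π i = 1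

/-- The Cesàro average `𝒜_t(A) = (1/t) ∑_{s=1}^t A^s`. -/
def cesaro {n : ℕ} (A : Matrix (Fin n) (Fin n) ℝ) (t : ℕ) : Matrix (Fin n) (Fin n) ℝ :=
  (t : ℝ)⁻¹ • ∑ s ∈ Finset.Icc 1 t, A ^ s

/-- `X` has Markov type `p` with constant `M`. -/
def HasMarkovType (X : Type*) [MetricSpace X] (p M : ℝ) : Prop :=
  ∀ (n t : ℕ), 0 < n → 0 < t → ∀ (π : Fin n → ℝ) (A : Matrix (Fin n) (Fin n) ℝ),
    IsProbVec π → IsStochastic A → IsReversible A π → ∀ x : Fin n → X,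
      ∑ i, ∑ j, π i * (A ^ t) i j * dist (x i) (x j) ^ p ≤
        M ^ p * t * ∑ i, ∑ j, π i * A i j * dist (x i) (x j) ^ p

/-- `X` has metric Markov cotype `p` with constant `N`. -/
def HasMetricMarkovCotype (X : Type*) [MetricSpace X] (p N : ℝ) : Prop :=
  ∀ (n t : ℕ), 0 < n → 0 < t → ∀ (π : Fin n → ℝ) (A : Matrix (Fin n) (Fin n) ℝ),
    IsProbVec π → IsStochastic A → IsReversible A π → ∀ x : Fin n → X,
      ∃ y : Fin n → X,
        (∑ i, π i * dist (x i) (y i) ^ p) +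
          t * ∑ i, ∑ j, π i * A i j * dist (y i) (y j) ^ p ≤
        N ^ p * ∑ i, ∑ j, π i * cesaro A t i j * dist (x i) (x j) ^ p

/-- The Markov type `p` constant `M_p(X)`. -/
def markovTypeConst (X : Type*) [MetricSpace X] (p : ℝ) : ℝ :=
  sInf {M : ℝ | 0 < M ∧ HasMarkovType X p M}

/-- The metric Markov cotype `p` constant `N_p(X)`. -/
def markovCotypeConst (X : Type*) [MetricSpace X] (p : ℝ) : ℝ :=
  sInf {N : ℝ | 0 < N ∧ HasMetricMarkovCotype X p N}

/-- The nonlinear spectral gap quantity `γ₊(A, d_X^p)`. -/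
def gammaPlus (X : Type*) [MetricSpace X] {n : ℕ} (A : Matrix (Fin n) (Fin n) ℝ)
    (p : ℝ) : ℝ≥0∞ :=
  sInf {g : ℝ≥0∞ | ∀ x y : Fin n → X,
    ENNReal.ofReal (((n : ℝ) ^ 2)⁻¹ * ∑ i, ∑ j, dist (x i) (y j) ^ p) ≤
      (g / (n : ℝ≥0∞)) * ENNReal.ofReal (∑ i, ∑ j, A i j * dist (x i) (y j) ^ p)}

/-- The metric of `L_p^n(X)`. -/
def dLpn {X : Type*} [MetricSpace X] (p : ℝ) {n : ℕ} (f g : Fin n → X) : ℝ :=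
  ((n : ℝ)⁻¹ * ∑ i, dist (f i) (g i) ^ p) ^ p⁻¹

/-- The barycenter `B(f) = B((1/n) ∑ δ_{f(i)})` of `f : Fin n → X`. -/
def baryFun {X : Type*} [MetricSpace X] (bary : FinProb X → X) {n : ℕ} (hn : 0 < n)
    (f : Fin n → X) : X :=
  bary (FinProb.mixN (fun _ : Fin n => 1) f (fun _ => zero_le_one)
    (by
      simp only [Finset.sum_const, Finset.card_univ, Fintype.card_fin, nsmul_eq_mul, mul_one]
      exact_mod_cast hn))

/-- The nonlinear action `(A ⊗ I_X^n)(f)(i) = B(∑_j a_{ij} δ_{f(j)})`. -/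
def matAct {X : Type*} [MetricSpace X] (bary : FinProb X → X) {n : ℕ}
    (A : Matrix (Fin n) (Fin n) ℝ) (hA : IsStochastic A) (f : Fin n → X) : Fin n → X :=
  fun i => bary (FinProb.mix (fun j => A i j) f (fun j => hA.1 i j) (hA.2 i))

/-- The quantity `λ_p(T)`. -/
def lambdaP {X : Type*} [MetricSpace X] (p : ℝ) {n : ℕ} (hn : 0 < n)
    (bary : FinProb X → X) (T : (Fin n → X) → (Fin n → X)) : ℝ≥0∞ :=
  sInf {l : ℝ≥0∞ | ∀ f : Fin n → X,
    ENNReal.ofReal (dLpn p (T f) (fun _ => baryFun bary hn (T f))) ≤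
      l * ENNReal.ofReal (dLpn p f (fun _ => baryFun bary hn f))}

/-- A finite σ-algebra on a finite set `Ω`, described by its atoms. -/
structure FinPartition (Ω : Type*) [Fintype Ω] where
  atom : Ω → Finset Ω
  mem_atom : ∀ ω, ω ∈ atom ω
  atom_eq : ∀ ω ω', ω' ∈ atom ω → atom ω' = atom ω

/-- The conditional barycenter `B(Z | F)`. -/
def condBary {Ω X : Type*} [Fintype Ω] (bary : FinProb X → X)
    (μ : Ω → ℝ) (hμ : ∀ ω, 0 < μ ω) (F : FinPartition Ω) (Z : Ω → X) : Ω → X :=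
  fun ω => bary (FinProb.mixN (fun a : {a // a ∈ F.atom ω} => μ a) (fun a => Z a)
    (fun a => (hμ a).le)
    (Finset.sum_pos (fun a _ => hμ a) ⟨⟨ω, F.mem_atom ω⟩, Finset.mem_univ _⟩))


lemma exp_mix {ι X : Type*} [Fintype ι] (w : ι → ℝ) (Z : ι → X)
    (hw : ∀ i, 0 ≤ w i) (h1 : ∑ i, w i = 1) (g : X → ℝ) :
    (FinProb.mix w Z hw h1).exp g = ∑ i, w i * g (Z i) := by
  have h0 : (FinProb.mix w Z hw h1).exp g
      = (∑ i, Finsupp.single (Z i) (w i)).sum (fun x r => r * g x) := rfl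
  rw [h0, ← Finsupp.sum_finset_sum_index (fun a => zero_mul (g a))
    (fun a b₁ b₂ => add_mul b₁ b₂ (g a))]
  exact Finset.sum_congr rfl fun i _ => Finsupp.sum_single_index (zero_mul _)

lemma dist_bary_le {X : Type*} [MetricSpace X] (p K : ℝ) (hp : 1 ≤ p) (hK : 1 ≤ K)
    (bary : FinProb X → X) (hP : IsPBarycentric p K bary)
    (x : X) (μ : FinProb X) :
    dist x (bary μ) ^ p ≤ μ.exp fun y => dist x y ^ p := by
  have h := hP x μ
  have h0 : 0 ≤ K ^ (-p) * (μ.exp fun y => dist (bary μ) y ^ p) := by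
    apply mul_nonneg (Real.rpow_nonneg (by linarith) _)
    unfold FinProb.exp Finsupp.sum
    exact Finset.sum_nonneg fun y _ =>
      mul_nonneg (μ.nonneg y) (Real.rpow_nonneg dist_nonneg _)
  linarith

lemma key_ind {X : Type*} [MetricSpace X] (p K : ℝ) (hp : 1 ≤ p) (hK : 1 ≤ K)
    (bary : FinProb X → X) (hP : IsPBarycentric p K bary)
    (n : ℕ) (A : Matrix (Fin n) (Fin n) ℝ) (hA : IsStochastic A)
    (f : Fin n → X) :
    ∀ (t : ℕ) (M : Matrix (Fin n) (Fin n) ℝ), (∀ i j, 0 ≤ M i j) →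
      ∑ i, ∑ j, M i j * dist (f i) ((matAct bary A hA)^[t] f j) ^ p ≤
        ∑ i, ∑ j, (M * A ^ t) i j * dist (f i) (f j) ^ p := by
  intro t
  induction t with
  | zero =>
    intro M hM
    simp [pow_zero, Matrix.mul_one]
  | succ t ih =>
    intro M hM
    have hMA : ∀ i j, 0 ≤ (M * A) i j := by
      intro i j
      rw [Matrix.mul_apply]
      exact Finset.sum_nonneg fun k _ => mul_nonneg (hM i k) (hA.1 k j)
    calc ∑ i, ∑ j, M i j * dist (f i) ((matAct bary A hA)^[t+1] f j) ^ p
        ≤ ∑ i, ∑ j, M i j * ∑ k, A j k * dist (f i) ((matAct bary A hA)^[t] f k) ^ p := by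
          apply Finset.sum_le_sum; intro i _
          apply Finset.sum_le_sum; intro j _
          apply mul_le_mul_of_nonneg_left _ (hM i j)
          rw [Function.iterate_succ_apply']
          have := dist_bary_le p K hp hK bary hP (f i)
            (FinProb.mix (fun k => A j k) ((matAct bary A hA)^[t] f)
              (fun k => hA.1 j k) (hA.2 j))
          rw [exp_mix] at this
          exact this
      _ = ∑ i, ∑ k, (M * A) i k * dist (f i) ((matAct bary A hA)^[t] f k) ^ p := by
          apply Finset.sum_congr rfl; intro i _
          simp_rw [Finset.mul_sum, Matrix.mul_apply, Finset.sum_mul]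
          rw [Finset.sum_comm]
          exact Finset.sum_congr rfl fun k _ =>
            Finset.sum_congr rfl fun j _ => (mul_assoc _ _ _).symm
      _ ≤ ∑ i, ∑ j, (M * A * A ^ t) i j * dist (f i) (f j) ^ p := ih (M * A) hMA
      _ = ∑ i, ∑ j, (M * A ^ (t+1)) i j * dist (f i) (f j) ^ p := by
          rw [Matrix.mul_assoc, ← pow_succ']

theorem statement12 (p K : ℝ) (hp : 1 ≤ p) (hK : 1 ≤ K)
    (X : Type*) [MetricSpace X] (bary : FinProb X → X)
    (hBary : IsBarycenterMap bary) (hP : IsPBarycentric p K bary)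
    (n t : ℕ) (hn : 0 < n) (ht : 0 < t)
    (A : Matrix (Fin n) (Fin n) ℝ) (hA : IsStochastic A) (hsymm : A.IsSymm)
    (f : Fin n → X) :
    dLpn p f ((matAct bary A hA)^[t] f) ^ p ≤
      (n : ℝ)⁻¹ * ∑ i, ∑ j, (A ^ t) i j * dist (f i) (f j) ^ p := by
  have hkey := key_ind p K hp hK bary hP n A hA f t 1 (fun i j => by
    by_cases h : i = j <;> simp [Matrix.one_apply, h])
  rw [Matrix.one_mul] at hkey
  have hdiag : ∑ i, ∑ j, (1 : Matrix (Fin n) (Fin n) ℝ) i j *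
      dist (f i) ((matAct bary A hA)^[t] f j) ^ p =
      ∑ i, dist (f i) ((matAct bary A hA)^[t] f i) ^ p := by
    apply Finset.sum_congr rfl; intro i _
    rw [Finset.sum_eq_single i]
    · simp [Matrix.one_apply]
    · intro j _ hj; simp [Matrix.one_apply, Ne.symm hj]
    · intro h; exact absurd (Finset.mem_univ i) h
  rw [hdiag] at hkey
  have hnn : 0 ≤ (n : ℝ)⁻¹ * ∑ i, dist (f i) ((matAct bary A hA)^[t] f i) ^ p := by
    apply mul_nonneg (by positivity)
    exact Finset.sum_nonneg fun i _ => Real.rpow_nonneg dist_nonneg _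
  have heq : dLpn p f ((matAct bary A hA)^[t] f) ^ p =
      (n : ℝ)⁻¹ * ∑ i, dist (f i) ((matAct bary A hA)^[t] f i) ^ p := by
    unfold dLpn
    exact Real.rpow_inv_rpow hnn (by linarith)
  rw [heq]
  have hn' : (0:ℝ) < (n : ℝ)⁻¹ := by positivity
  exact mul_le_mul_of_nonneg_left hkey hn'.le

end
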